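/- arXiv:1909.12759 — 4 statements merged into one kernel-verified Lean document; each statement's English description precedes it below -/
import Mathlib

section
/- Let H, K be finite-dimensional complex Hilbert spaces, let (S_a)_{a∈A} be a finite family of self-adjoint operators on H with 0 ≤ S_a ≤ 1, and let (M_a)_{a∈A} be positive semidefinite operators on K with ∑_a M_a = 1 and each M_a ≠ 0. If ∑_a S_a ⊗ M_a = 1_{H⊗K}, then S_a = 1_H for every a ∈ A. -/
open Matrix Kronecker ComplexOrder

lemma kron_conjT {m n : ℕ} (A : Matrix (Fin m) (Fin m) ℂ) (B : Matrix (Fin n) (Fin n) ℂ) :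
    (A ⊗ₖ B)ᴴ = Aᴴ ⊗ₖ Bᴴ := by
  ext ⟨i,k⟩ ⟨j,l⟩
  simp [Matrix.conjTranspose_apply, Matrix.kroneckerMap_apply, mul_comm]

lemma kron_psd {m n : ℕ} {A : Matrix (Fin m) (Fin m) ℂ} {B : Matrix (Fin n) (Fin n) ℂ}
    (hA : A.PosSemidef) (hB : B.PosSemidef) : (A ⊗ₖ B).PosSemidef := by
  obtain ⟨C, rfl⟩ : ∃ C, A = Cᴴ * C := by
    open scoped MatrixOrder in exact CStarAlgebra.nonneg_iff_eq_star_mul_self.mp hA.nonneg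
  obtain ⟨D, rfl⟩ : ∃ D, B = Dᴴ * D := by
    open scoped MatrixOrder in exact CStarAlgebra.nonneg_iff_eq_star_mul_self.mp hB.nonneg
  rw [Matrix.mul_kronecker_mul, ← kron_conjT]
  exact Matrix.posSemidef_conjTranspose_mul_self _

lemma psd_sum_zero {n : Type*} [Fintype n] [DecidableEq n] {A : Type*} [Fintype A] {T : A → Matrix n n ℂ}
    (hT : ∀ a, (T a).PosSemidef) (hsum : ∑ a, T a = 0) : ∀ a, T a = 0 := by
  have key : ∀ a, ∀ x : n → ℂ, T a *ᵥ x = 0 := by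
    intro a x
    have h0 : ∑ b, star x ⬝ᵥ (T b) *ᵥ x = 0 := by
      have h1 : star x ⬝ᵥ (∑ b, T b) *ᵥ x = 0 := by rw [hsum]; simp
      have h2 : (∑ b, T b) *ᵥ x = ∑ b, T b *ᵥ x := by
        ext i
        simp only [Matrix.mulVec, dotProduct, Matrix.sum_apply, Finset.sum_apply, Finset.sum_mul]
        rw [Finset.sum_comm]
      rw [h2] at h1
      rw [← h1]
      simp only [dotProduct, Finset.sum_apply, Finset.mul_sum]
      rw [Finset.sum_comm]
    have := (Finset.sum_eq_zero_iff_of_nonneg (fun b _ => (hT b).dotProduct_mulVec_nonneg x)).mp h0 a (Finset.mem_univ a)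
    exact ((hT a).dotProduct_mulVec_zero_iff x).mp this
  intro a
  ext i j
  have := congrFun (key a (Pi.single j 1)) i
  simpa [Matrix.mulVec_single] using this

/-- if `(S a)` are self-adjoint with `0 ≤ S a ≤ 1`, `(M a)` are positive
semidefinite with `∑ M a = 1` and each `M a ≠ 0`, and `∑ S a ⊗ M a = 1`, then every
`S a` is the identity. -/
theorem stmt1 {dH dK : ℕ} {A : Type*} [Fintype A]
    (S : A → Matrix (Fin dH) (Fin dH) ℂ) (M : A → Matrix (Fin dK) (Fin dK) ℂ)
    (hS0 : ∀ a, (S a).PosSemidef) (hS1 : ∀ a, ((1 : Matrix (Fin dH) (Fin dH) ℂ) - S a).PosSemidef)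
    (hM : ∀ a, (M a).PosSemidef) (hMsum : ∑ a, M a = 1) (hMne : ∀ a, M a ≠ 0)
    (hkron : ∑ a, (S a ⊗ₖ M a) = (1 : Matrix ((Fin dH) × (Fin dK)) ((Fin dH) × (Fin dK)) ℂ)) :
    ∀ a, S a = 1 := by
  have hT : ∀ a, ((1 - S a) ⊗ₖ M a).PosSemidef := fun a => kron_psd (hS1 a) (hM a)
  have hsum0 : ∑ a, ((1 - S a) ⊗ₖ M a) = 0 := by
    have h1 : ∑ a, ((1 : Matrix (Fin dH) (Fin dH) ℂ) ⊗ₖ M a) =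
        (1 : Matrix (Fin dH) (Fin dH) ℂ) ⊗ₖ (∑ a, M a) := by
      ext ⟨i,k⟩ ⟨j,l⟩
      simp [Matrix.kroneckerMap_apply, Matrix.sum_apply, Finset.mul_sum]
    calc ∑ a, ((1 - S a) ⊗ₖ M a)
        = ∑ a, ((1 : Matrix (Fin dH) (Fin dH) ℂ) ⊗ₖ M a - S a ⊗ₖ M a) := by
          congr 1; funext a
          ext ⟨i,k⟩ ⟨j,l⟩
          simp [Matrix.kroneckerMap_apply, sub_mul]
      _ = (1 : Matrix (Fin dH) (Fin dH) ℂ) ⊗ₖ (∑ a, M a) - ∑ a, (S a ⊗ₖ M a) := by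
          rw [Finset.sum_sub_distrib, h1]
      _ = 0 := by rw [hMsum, hkron, Matrix.one_kronecker_one, sub_self]
  have hz := psd_sum_zero hT hsum0
  intro a
  obtain ⟨k, l, hkl⟩ : ∃ k l, M a k l ≠ 0 := by
    by_contra h
    push_neg at h
    exact hMne a (by ext k l; simpa using h k l)
  have : ∀ i j, ((1 : Matrix (Fin dH) (Fin dH) ℂ) - S a) i j = 0 := by
    intro i j
    have := congrFun (congrFun (hz a) (i, k)) (j, l)
    simp only [Matrix.kroneckerMap_apply, Matrix.zero_apply] at this
    exact (mul_eq_zero.mp this).resolve_right hkl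
  have h0 : (1 : Matrix (Fin dH) (Fin dH) ℂ) - S a = 0 := by ext i j; exact this i j
  symm
  rwa [← sub_eq_zero]
end

section
/- Let H, K be finite-dimensional complex Hilbert spaces, let T be a positive semidefinite operator on H ⊗ K, and suppose the partial trace of T over H equals c·P where c ≥ 0 and P is a rank-one orthogonal projection on K. Then T = S ⊗ P for some positive semidefinite operator S on H. -/
open Kronecker ComplexOrder

/-- Partial trace over the first tensor factor. -/
noncomputable def ptraceLeft {m n : Type*} [Fintype m] (T : Matrix (m × n) (m × n) ℂ) : Matrix n n ℂ :=
  Matrix.of fun i j => ∑ k, T (k, i) (k, j)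

section auxx
open Matrix
open scoped MatrixOrder

lemma aux_trace_zero {n : Type*} [Fintype n] [DecidableEq n] {N : Matrix n n ℂ} (hN : N.PosSemidef)
    (h : N.trace = 0) : N = 0 := by
  have h2 : CFC.sqrt N * CFC.sqrt N = N := CFC.sqrt_mul_sqrt_self N hN.nonneg
  have hherm : (CFC.sqrt N).conjTranspose = CFC.sqrt N := (CFC.sqrt_nonneg N).posSemidef.1
  have h3 : ((CFC.sqrt N)ᴴ * CFC.sqrt N).trace = 0 := by rw [hherm, h2, h]
  have h4 : CFC.sqrt N = 0 := by
    have : ∀ i j, CFC.sqrt N i j = 0 := by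
      have hterm : ∀ p : n × n, 0 ≤ (star (CFC.sqrt N p.1 p.2) * CFC.sqrt N p.1 p.2) :=
        fun p => star_mul_self_nonneg _
      have hsum : ∑ p : n × n, star (CFC.sqrt N p.1 p.2) * CFC.sqrt N p.1 p.2 = 0 := by
        rw [← h3]
        simp only [Matrix.trace, Matrix.diag, Matrix.mul_apply, Matrix.conjTranspose_apply]
        rw [Fintype.sum_prod_type]
        exact Finset.sum_comm
      have := (Fintype.sum_eq_zero_iff_of_nonneg hterm).mp hsum
      intro i j
      have := congr_fun this (i, j)
      simpa [mul_comm, mul_eq_zero] using this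
    ext i j; simp [this i j]
  rw [← h2, h4, mul_zero]


lemma aux_trace_kron {dH dK : ℕ} (T : Matrix ((Fin dH) × (Fin dK)) ((Fin dH) × (Fin dK)) ℂ)
    (Q : Matrix (Fin dK) (Fin dK) ℂ) :
    (T * ((1 : Matrix (Fin dH) (Fin dH) ℂ) ⊗ₖ Q)).trace = ((ptraceLeft T) * Q).trace := by
  simp only [Matrix.trace, Matrix.diag, Matrix.mul_apply, ptraceLeft, Matrix.of_apply,
    Matrix.kroneckerMap_apply, Matrix.one_apply, ite_mul, one_mul, zero_mul, mul_ite, mul_zero,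
    Finset.sum_mul, Fintype.sum_prod_type]
  simp only [Finset.sum_ite_irrel, Finset.sum_const_zero, Finset.sum_ite_eq', Finset.mem_univ,
    if_true]
  rw [Finset.sum_comm]
  exact Finset.sum_congr rfl fun i _ => Finset.sum_comm

lemma aux_rank_one {dK : ℕ} (P : Matrix (Fin dK) (Fin dK) ℂ) (hPh : P.IsHermitian)
    (hPp : P * P = P) (hPrank : P.rank = 1) :
    ∃ u : Fin dK → ℂ, ∀ i j, P i j = u i * star (u j) := by
  -- extract a generating vector of the range
  rw [Matrix.rank] at hPrank
  obtain ⟨v0, hv0ne, hv0⟩ := finrank_eq_one_iff'.mp hPrank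
  set v : Fin dK → ℂ := (v0 : Fin dK → ℂ) with hv
  -- columns of P are multiples of v
  have hcol : ∀ j, ∃ c : ℂ, ∀ i, P i j = c * v i := by
    intro j
    have hmem : (fun i => P i j) ∈ LinearMap.range P.mulVecLin := by
      refine ⟨Pi.single j 1, ?_⟩
      ext i
      simp [Matrix.mulVecLin_apply, Matrix.mulVec_single]
    obtain ⟨c, hc⟩ := hv0 ⟨_, hmem⟩
    refine ⟨c, fun i => ?_⟩
    have := congr_fun (congrArg Subtype.val hc) i
    simpa [hv] using this.symm
  choose cf hcf using hcol
  have hvne : v ≠ 0 := by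
    intro h
    apply hv0ne
    ext i
    exact congr_fun h i
  obtain ⟨i0, hi0⟩ : ∃ i0, v i0 ≠ 0 := by
    by_contra h
    push_neg at h
    exact hvne (funext h)
  -- Hermitian relation
  have hherm : ∀ i j, cf j * v i = star (cf i) * star (v j) := by
    intro i j
    have h1 := hPh.apply i j
    rw [hcf j i, hcf i j] at h1
    rw [← h1]; exact star_mul' _ _
  set t : ℂ := star (cf i0) / v i0 with ht
  have hPform : ∀ i j, P i j = t * v i * star (v j) := by
    intro i j
    have h2 := hherm j i0
    -- cf i0 * v j = star (cf j) * star (v i0)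
    have h3 := hherm i j
    -- cf j * v i = star (cf i) * star (v j)
    have hcfj : cf j = t * star (v j) := by
      have := hherm i0 j
      rw [ht, div_mul_eq_mul_div, eq_div_iff hi0]; exact this
    rw [hcf j i, hcfj]; ring
  -- t is a nonneg real
  have hPpsd : P.PosSemidef := by
    have : P = Pᴴ * P := by rw [hPh.eq, hPp]
    rw [this]
    exact Matrix.posSemidef_conjTranspose_mul_self P
  have hdiag : 0 ≤ P i0 i0 := by
    have h := hPpsd.diag_nonneg (i := i0)
    simpa [dotProduct, Pi.single_apply] using h
  have htre : t = (t.re : ℂ) ∧ 0 ≤ t.re := by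
    set r : ℝ := Complex.normSq (v i0) with hrdef
    have hr : (0:ℝ) < r := Complex.normSq_pos.mpr hi0
    have h4 : P i0 i0 = t * (r : ℂ) := by
      rw [hPform i0 i0, mul_assoc]
      congr 1
      rw [hrdef, Complex.star_def, Complex.mul_conj]
    have h5re : (P i0 i0).re = t.re * r := by rw [h4]; simp [Complex.mul_re]
    have h5im : (P i0 i0).im = t.im * r := by rw [h4]; simp [Complex.mul_im]
    obtain ⟨hre, him⟩ := Complex.nonneg_iff.mp hdiag
    have htim : t.im = 0 := by
      have h0 : t.im * r = 0 := by rw [← h5im, ← him]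
      rcases mul_eq_zero.mp h0 with h | h
      · exact h
      · exact absurd h (ne_of_gt hr)
    constructor
    · apply Complex.ext <;> simp [htim]
    · nlinarith [h5re, hre, hr]
  refine ⟨fun i => (Real.sqrt t.re : ℂ) * v i, fun i j => ?_⟩
  rw [hPform i j]
  have : (Real.sqrt t.re : ℂ) * (Real.sqrt t.re : ℂ) = (t.re : ℂ) := by
    rw [← Complex.ofReal_mul, Real.mul_self_sqrt htre.2]
  rw [star_mul']
  rw [Complex.star_def, Complex.conj_ofReal]
  calc t * v i * star (v j) = ((t.re : ℂ)) * v i * star (v j) := by rw [← htre.1]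
    _ = (Real.sqrt t.re : ℂ) * v i * ((Real.sqrt t.re : ℂ) * star (v j)) := by
        rw [← this]; ring
end auxx

/-- a positive semidefinite operator on `H ⊗ K` whose partial trace over `H`
is a nonnegative multiple of a rank-one orthogonal projection `P` factorizes as `S ⊗ P`. -/
theorem stmt2 {dH dK : ℕ}
    (T : Matrix ((Fin dH) × (Fin dK)) ((Fin dH) × (Fin dK)) ℂ) (hT : T.PosSemidef)
    (c : ℝ) (hc : 0 ≤ c)
    (P : Matrix (Fin dK) (Fin dK) ℂ) (hPh : P.IsHermitian) (hPp : P * P = P)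
    (hPrank : P.rank = 1)
    (hptr : ptraceLeft T = (c : ℂ) • P) :
    ∃ S : Matrix (Fin dH) (Fin dH) ℂ, S.PosSemidef ∧ T = S ⊗ₖ P := by
  classical
  obtain ⟨u, hu⟩ := aux_rank_one P hPh hPp hPrank
  set Q : Matrix (Fin dK) (Fin dK) ℂ := 1 - P with hQ
  have hQh : Q.IsHermitian := Matrix.isHermitian_one.sub hPh
  have hQQ : Q * Q = Q := by
    simp [hQ, Matrix.mul_sub, Matrix.sub_mul, hPp]
  set A : Matrix ((Fin dH) × (Fin dK)) ((Fin dH) × (Fin dK)) ℂ :=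
    (1 : Matrix (Fin dH) (Fin dH) ℂ) ⊗ₖ Q with hA
  have hAh : A.conjTranspose = A := by
    ext ⟨a, i⟩ ⟨b, j⟩
    simp only [hA, Matrix.conjTranspose_apply, Matrix.kroneckerMap_apply, Matrix.one_apply]
    by_cases hab : a = b
    · simp [hab, eq_comm, hQh.apply]
    · simp [hab, Ne.symm hab]
  have hAA : A * A = A := by
    rw [hA, ← Matrix.mul_kronecker_mul, one_mul, hQQ]
  have hPQ : P * Q = 0 := by simp [hQ, Matrix.mul_sub, hPp]
  have htr : (A.conjTranspose * T * A).trace = 0 := by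
    rw [hAh, Matrix.trace_mul_cycle, hAA, Matrix.trace_mul_comm, hA,
      aux_trace_kron, hptr, Matrix.smul_mul, hPQ]
    simp
  have hATA : A.conjTranspose * T * A = 0 :=
    aux_trace_zero (hT.conjTranspose_mul_mul_same A) htr
  set M := (open scoped MatrixOrder in CFC.sqrt T) with hM
  have hMM : M * M = T := (open scoped MatrixOrder in CFC.sqrt_mul_sqrt_self T hT.nonneg)
  have hMh : M.conjTranspose = M := (open scoped MatrixOrder in (Matrix.nonneg_iff_posSemidef.mp (CFC.sqrt_nonneg T)).1)
  have hATA' : A * T * A = 0 := by rwa [hAh] at hATA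
  have hMA : M * A = 0 := by
    rw [← Matrix.conjTranspose_mul_self_eq_zero, Matrix.conjTranspose_mul, hMh, hAh]
    calc A * M * (M * A) = A * (M * M) * A := by simp only [Matrix.mul_assoc]
      _ = A * T * A := by rw [hMM]
      _ = 0 := hATA'
  have hTA : T * A = 0 := by rw [← hMM, Matrix.mul_assoc, hMA, Matrix.mul_zero]
  have hAT : A * T = 0 := by
    have := congrArg Matrix.conjTranspose hTA
    rwa [Matrix.conjTranspose_mul, hAh, hT.1.eq, Matrix.conjTranspose_zero] at this
  have h1P : (1 : Matrix (Fin dH) (Fin dH) ℂ) ⊗ₖ P = 1 - A := by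
    ext ⟨a, i⟩ ⟨b, j⟩
    simp only [hA, hQ, Matrix.kroneckerMap_apply, Matrix.sub_apply, Matrix.one_apply,
      Prod.mk.injEq]
    by_cases hab : a = b
    · by_cases hij : i = j <;> simp [hab, hij]
    · simp [hab]
  have hfact : ((1 : Matrix (Fin dH) (Fin dH) ℂ) ⊗ₖ P) * T *
      ((1 : Matrix (Fin dH) (Fin dH) ℂ) ⊗ₖ P) = T := by
    rw [h1P, Matrix.sub_mul, Matrix.one_mul, hAT, sub_zero, Matrix.mul_sub, Matrix.mul_one, hTA,
      sub_zero]
  set B : Matrix ((Fin dH) × (Fin dK)) (Fin dH) ℂ :=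
    Matrix.of (fun p b => if p.1 = b then u p.2 else 0) with hB
  refine ⟨B.conjTranspose * T * B, hT.conjTranspose_mul_mul_same B, ?_⟩
  conv_lhs => rw [← hfact]
  ext ⟨a, i⟩ ⟨b, j⟩
  simp only [Matrix.mul_apply, Matrix.kroneckerMap_apply, Matrix.one_apply,
    Matrix.conjTranspose_apply, Matrix.of_apply, hB, Fintype.sum_prod_type, ite_mul, mul_ite,
    zero_mul, mul_zero, apply_ite (star : ℂ → ℂ), star_zero, Finset.sum_ite_irrel, Finset.sum_const_zero,
    Finset.sum_ite_eq, Finset.sum_ite_eq', Finset.mem_univ, if_true, Finset.sum_mul,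
    Finset.mul_sum, hu]
  refine Finset.sum_congr rfl fun x _ => Finset.sum_congr rfl fun y _ => ?_
  ring
end

section
/- For any quantum state ρ on a bipartite finite-dimensional Hilbert space H_A ⊗ H_B and any self-adjoint operators A_0, A_1 on H_A and B_0, B_1 on H_B with A_x² = 1 and B_y² = 1, the CHSH value tr[(A_0⊗B_0 + A_0⊗B_1 + A_1⊗B_0 − A_1⊗B_1) ρ] is at most 2√2. -/
open Kronecker ComplexOrder

open Matrix in
lemma tsirelson_kron_conjT {m n p q : Type*} [Fintype m] [Fintype n] [Fintype p] [Fintype q]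
    (X : Matrix m n ℂ) (Y : Matrix p q ℂ) : (X ⊗ₖ Y)ᴴ = Xᴴ ⊗ₖ Yᴴ := by
  ext ⟨i,j⟩ ⟨k,l⟩
  simp [Matrix.conjTranspose_apply, star_mul']

lemma tsirelson_kron_sub {m n p q : Type*}
    (X : Matrix m n ℂ) (Y Z : Matrix p q ℂ) : X ⊗ₖ (Y - Z) = X ⊗ₖ Y - X ⊗ₖ Z := by
  ext ⟨i,j⟩ ⟨k,l⟩
  simp [mul_sub]

open Matrix in
lemma tsirelson_trace_cts_nonneg {n m : Type*} [Fintype n] [Fintype m] (B : Matrix m n ℂ) :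
    0 ≤ (Bᴴ * B).trace := by
  rw [Matrix.trace]
  refine Finset.sum_nonneg fun j _ => ?_
  rw [Matrix.diag_apply, Matrix.mul_apply]
  refine Finset.sum_nonneg fun i _ => ?_
  simpa [Matrix.conjTranspose_apply] using star_mul_self_nonneg (B i j)

open Matrix in
lemma tsirelson_trace_herm_sq_mul_nonneg {n : Type*} [Fintype n] [DecidableEq n]
    {ρ : Matrix n n ℂ} (hρ : ρ.PosSemidef) (P : Matrix n n ℂ) (hP : Pᴴ = P) :
    0 ≤ (P * P * ρ).trace := by
  open scoped MatrixOrder in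
  obtain ⟨S, hS, hSh⟩ : ∃ S : Matrix n n ℂ, S * S = ρ ∧ Sᴴ = S :=
    ⟨CFC.sqrt ρ, CFC.sqrt_mul_sqrt_self ρ hρ.nonneg, (CFC.sqrt_nonneg ρ).posSemidef.isHermitian⟩
  have : (P * P * ρ).trace = ((P * S)ᴴ * (P * S)).trace := by
    rw [Matrix.conjTranspose_mul, hSh, hP,
      show S * P * (P * S) = S * (P * P * S) by noncomm_ring,
      Matrix.trace_mul_comm S (P * P * S),
      show P * P * S * S = P * P * ρ by rw [mul_assoc, hS]]
  rw [this]
  exact tsirelson_trace_cts_nonneg _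

open Matrix in
/-- Tsirelson's bound: for any bipartite quantum state `ρ` and ±1-valued
observables `A x`, `B y`, the CHSH value is at most `2√2`. -/
theorem stmt4 {dA dB : ℕ}
    (ρ : Matrix ((Fin dA) × (Fin dB)) ((Fin dA) × (Fin dB)) ℂ)
    (hρ : ρ.PosSemidef) (hρtr : ρ.trace = 1)
    (A : Fin 2 → Matrix (Fin dA) (Fin dA) ℂ) (B : Fin 2 → Matrix (Fin dB) (Fin dB) ℂ)
    (hAh : ∀ x, (A x).IsHermitian) (hBh : ∀ y, (B y).IsHermitian)
    (hA2 : ∀ x, A x * A x = 1) (hB2 : ∀ y, B y * B y = 1) :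
    (((A 0 ⊗ₖ B 0 + A 0 ⊗ₖ B 1 + A 1 ⊗ₖ B 0 - A 1 ⊗ₖ B 1) * ρ).trace).re
      ≤ 2 * Real.sqrt 2 := by
  set C := A 0 ⊗ₖ B 0 + A 0 ⊗ₖ B 1 + A 1 ⊗ₖ B 0 - A 1 ⊗ₖ B 1 with hCdef
  set sc : ℂ := (Real.sqrt 2 : ℂ) with hscdef
  have hs2 : sc * sc = 2 := by
    rw [hscdef]
    norm_cast
    exact Real.mul_self_sqrt (by norm_num)
  set P := sc • (A 0 ⊗ₖ (1 : Matrix (Fin dB) (Fin dB) ℂ)) -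
      (1 : Matrix (Fin dA) (Fin dA) ℂ) ⊗ₖ (B 0 + B 1) with hPdef
  set Q := sc • (A 1 ⊗ₖ (1 : Matrix (Fin dB) (Fin dB) ℂ)) -
      (1 : Matrix (Fin dA) (Fin dA) ℂ) ⊗ₖ (B 0 - B 1) with hQdef
  have hstar : star sc = sc := by
    rw [hscdef]; exact Complex.conj_ofReal _
  have hPh : Pᴴ = P := by
    rw [hPdef]
    rw [Matrix.conjTranspose_sub, Matrix.conjTranspose_smul,
      tsirelson_kron_conjT, tsirelson_kron_conjT,
      hstar, (hAh 0).eq, Matrix.conjTranspose_one, Matrix.conjTranspose_one,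
      Matrix.conjTranspose_add, (hBh 0).eq, (hBh 1).eq]
  have hQh : Qᴴ = Q := by
    rw [hQdef]
    rw [Matrix.conjTranspose_sub, Matrix.conjTranspose_smul,
      tsirelson_kron_conjT, tsirelson_kron_conjT,
      hstar, (hAh 1).eq, Matrix.conjTranspose_one, Matrix.conjTranspose_one,
      Matrix.conjTranspose_sub, (hBh 0).eq, (hBh 1).eq]
  have hkey : P * P + Q * Q =
      (8:ℂ) • (1 : Matrix ((Fin dA) × (Fin dB)) ((Fin dA) × (Fin dB)) ℂ) - (2 * sc) • C := by
    rw [hPdef, hQdef, hCdef]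
    simp only [sub_mul, mul_sub, smul_mul_assoc, mul_smul_comm, smul_smul, smul_sub, smul_add,
      Matrix.kronecker_add, Matrix.add_kronecker, tsirelson_kron_sub, add_mul, mul_add,
      ← Matrix.mul_kronecker_mul, one_mul, mul_one, hA2, hB2, Matrix.one_kronecker_one, hs2]
    module
  have h1 := tsirelson_trace_herm_sq_mul_nonneg hρ P hPh
  have h2 := tsirelson_trace_herm_sq_mul_nonneg hρ Q hQh
  have h3 : 0 ≤ ((P * P + Q * Q) * ρ).trace := by
    rw [add_mul, Matrix.trace_add]
    exact add_nonneg h1 h2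
  rw [hkey, sub_mul, smul_mul_assoc, smul_mul_assoc, one_mul, Matrix.trace_sub,
    Matrix.trace_smul, Matrix.trace_smul, hρtr] at h3
  rw [Complex.nonneg_iff] at h3
  have h4 := h3.1
  rw [Complex.sub_re] at h4
  have e1 : ((8:ℂ) • (1:ℂ)).re = 8 := by norm_num
  have e2 : ((2 * sc) • ((C * ρ).trace)).re = 2 * Real.sqrt 2 * ((C * ρ).trace).re := by
    rw [hscdef, smul_eq_mul]
    rw [show (2 * ((Real.sqrt 2 : ℝ) : ℂ)) = (((2 * Real.sqrt 2 : ℝ)) : ℂ) by push_cast; ring]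
    rw [Complex.re_ofReal_mul]
  rw [e1, e2] at h4
  nlinarith [Real.sqrt_nonneg 2, Real.mul_self_sqrt (by norm_num : (0:ℝ) ≤ 2)]
end

section
/- Let A_0, A_1 be self-adjoint involutions on a finite-dimensional Hilbert space H that anticommute: A_0 A_1 + A_1 A_0 = 0. Then the dimension of H is even, and there is a unitary U : H → ℂ² ⊗ K for some Hilbert space K such that U A_0 U† = σ_Z ⊗ 1 and U A_1 U† = σ_X ⊗ 1. -/
open Kronecker Matrix

noncomputable def sigmaZ : Matrix (Fin 2) (Fin 2) ℂ := !![1, 0; 0, -1]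
noncomputable def sigmaX : Matrix (Fin 2) (Fin 2) ℂ := !![0, 1; 1, 0]

namespace Stmt7Aux

open scoped ComplexOrder

/-- Key structural lemma: an orthonormal family realizing the normal form. -/
lemma key {n : ℕ} (A₀ A₁ : Matrix (Fin n) (Fin n) ℂ)
    (hA₀h : A₀.IsHermitian) (hA₁h : A₁.IsHermitian)
    (hA₀2 : A₀ * A₀ = 1) (hA₁2 : A₁ * A₁ = 1)
    (hanti : A₀ * A₁ + A₁ * A₀ = 0) :
    ∃ (k : ℕ) (e : (Fin 2 × Fin k) → EuclideanSpace ℂ (Fin n)),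
      n = 2 * k ∧
      (∀ r s, star ((e r : Fin n → ℂ)) ⬝ᵥ (e s : Fin n → ℂ) = if r = s then 1 else 0) ∧
      (∀ i, A₀ *ᵥ (e (0, i) : Fin n → ℂ) = e (0, i)) ∧
      (∀ i, A₀ *ᵥ (e (1, i) : Fin n → ℂ) = -(e (1, i) : Fin n → ℂ)) ∧
      (∀ i, A₁ *ᵥ (e (0, i) : Fin n → ℂ) = e (1, i)) ∧
      (∀ i, A₁ *ᵥ (e (1, i) : Fin n → ℂ) = e (0, i)) := by
  classical
  -- self-adjointness as dot products
  have hsd : ∀ (A : Matrix (Fin n) (Fin n) ℂ), A.IsHermitian →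
      ∀ u w : Fin n → ℂ, star (A *ᵥ u) ⬝ᵥ w = star u ⬝ᵥ (A *ᵥ w) := by
    intro A hA u w
    rw [star_mulVec, hA.eq, dotProduct_mulVec]
  -- anticommutation in mulVec form
  have hAC : A₀ * A₁ = -(A₁ * A₀) :=
    eq_neg_of_add_eq_zero_left hanti
  have hflip : ∀ v : Fin n → ℂ, A₀ *ᵥ v = v → A₀ *ᵥ (A₁ *ᵥ v) = -(A₁ *ᵥ v) := by
    intro v hv
    rw [mulVec_mulVec, hAC, neg_mulVec, ← mulVec_mulVec, hv]
  have hflip' : ∀ v : Fin n → ℂ, A₀ *ᵥ v = -v → A₀ *ᵥ (A₁ *ᵥ v) = A₁ *ᵥ v := by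
    intro v hv
    rw [mulVec_mulVec, hAC, neg_mulVec, ← mulVec_mulVec, hv, mulVec_neg, neg_neg]
  -- orthogonality of opposite eigenvectors
  have horthpm : ∀ u w : Fin n → ℂ, A₀ *ᵥ u = u → A₀ *ᵥ w = -w → star u ⬝ᵥ w = 0 := by
    intro u w hu hw
    have h : star u ⬝ᵥ w = -(star u ⬝ᵥ w) := by
      conv_lhs => rw [← hu]
      rw [hsd A₀ hA₀h, hw, dotProduct_neg]
    have h2 : star u ⬝ᵥ w + star u ⬝ᵥ w = 0 := by
      nth_rewrite 1 [h]; ring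
    exact (add_self_eq_zero).mp h2
  -- A₁ preserves dot products
  have hA₁iso : ∀ u w : Fin n → ℂ, star (A₁ *ᵥ u) ⬝ᵥ (A₁ *ᵥ w) = star u ⬝ᵥ w := by
    intro u w
    rw [hsd A₁ hA₁h, mulVec_mulVec, hA₁2, one_mulVec]
  -- the +1 eigenspace of A₀
  let Vp : Submodule ℂ (EuclideanSpace ℂ (Fin n)) :=
    { carrier := {v | A₀ *ᵥ (v : Fin n → ℂ) = v}
      add_mem' := by
        intro a b ha hb
        show A₀ *ᵥ ((a : Fin n → ℂ) + (b : Fin n → ℂ)) = (a : Fin n → ℂ) + b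
        rw [mulVec_add, ha, hb]
      zero_mem' := by
        show A₀ *ᵥ (0 : Fin n → ℂ) = 0
        simp
      smul_mem' := by
        intro c a ha
        show A₀ *ᵥ (c • (a : Fin n → ℂ)) = c • (a : Fin n → ℂ)
        rw [mulVec_smul, ha] }
  have memVp : ∀ v : EuclideanSpace ℂ (Fin n), v ∈ Vp ↔ A₀ *ᵥ (v : Fin n → ℂ) = v :=
    fun v => Iff.rfl
  set k := Module.finrank ℂ Vp with hk
  let b : OrthonormalBasis (Fin k) ℂ Vp := stdOrthonormalBasis ℂ Vp
  -- orthonormality of b as dot products in the ambient space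
  have hbo : ∀ i j : Fin k, star ((b i : EuclideanSpace ℂ (Fin n)) : Fin n → ℂ) ⬝ᵥ
      ((b j : EuclideanSpace ℂ (Fin n)) : Fin n → ℂ) = if i = j then 1 else 0 := by
    intro i j
    have h := orthonormal_iff_ite.mp b.orthonormal i j
    have h2 : (inner ℂ ((b i : EuclideanSpace ℂ (Fin n))) ((b j : EuclideanSpace ℂ (Fin n))) : ℂ)
        = if i = j then 1 else 0 := by
      rw [← Submodule.coe_inner, h]
    rw [← h2, EuclideanSpace.inner_eq_star_dotProduct]
    exact dotProduct_comm _ _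
  have hbmem : ∀ i : Fin k, A₀ *ᵥ ((b i : EuclideanSpace ℂ (Fin n)) : Fin n → ℂ) = b i :=
    fun i => (memVp _).mp (b i).2
  -- the family e
  let e : Fin 2 × Fin k → EuclideanSpace ℂ (Fin n) := fun r =>
    if r.1 = 0 then (b r.2 : EuclideanSpace ℂ (Fin n))
    else WithLp.toLp 2 (A₁ *ᵥ ((b r.2 : EuclideanSpace ℂ (Fin n)) : Fin n → ℂ))
  have he0 : ∀ i, e (0, i) = (b i : EuclideanSpace ℂ (Fin n)) := fun i => if_pos rfl
  have he1 : ∀ i, (e (1, i) : Fin n → ℂ)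
      = A₁ *ᵥ ((b i : EuclideanSpace ℂ (Fin n)) : Fin n → ℂ) := by
    intro i
    have h1 : ¬ ((1 : Fin 2) = 0) := by decide
    have : e (1, i) = WithLp.toLp 2 (A₁ *ᵥ ((b i : EuclideanSpace ℂ (Fin n)) : Fin n → ℂ)) := if_neg h1
    rw [this]
  -- action facts
  have h00 : ∀ i, A₀ *ᵥ (e (0, i) : Fin n → ℂ) = e (0, i) := by
    intro i; rw [he0]; exact hbmem i
  have h01 : ∀ i, A₀ *ᵥ (e (1, i) : Fin n → ℂ) = -(e (1, i) : Fin n → ℂ) := by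
    intro i; rw [he1]; exact hflip _ (hbmem i)
  have h10 : ∀ i, A₁ *ᵥ (e (0, i) : Fin n → ℂ) = e (1, i) := by
    intro i; rw [he0, he1]
  have h11 : ∀ i, A₁ *ᵥ (e (1, i) : Fin n → ℂ) = e (0, i) := by
    intro i; rw [he0, he1, mulVec_mulVec, hA₁2, one_mulVec]
  -- orthonormality of e
  have hON : ∀ r s, star ((e r : Fin n → ℂ)) ⬝ᵥ (e s : Fin n → ℂ)
      = if r = s then 1 else 0 := by
    have hp2 : ∀ p : Fin 2, p = 0 ∨ p = 1 := by decide
    rintro ⟨p, i⟩ ⟨q, j⟩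
    rcases hp2 p with rfl | rfl <;> rcases hp2 q with rfl | rfl
    · rw [he0, he0, hbo]
      simp [Prod.ext_iff]
    · rw [he0, he1]
      have := horthpm _ _ (hbmem i) (hflip _ (hbmem j))
      rw [this]
      simp [Prod.ext_iff]
    · rw [he1, he0]
      have h0 := horthpm _ _ (hbmem j) (hflip _ (hbmem i))
      have : star ((b j : EuclideanSpace ℂ (Fin n)) : Fin n → ℂ) ⬝ᵥ
          (A₁ *ᵥ ((b i : EuclideanSpace ℂ (Fin n)) : Fin n → ℂ)) = 0 := h0
      rw [star_dotProduct] at this ⊢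
      · rw [show star (star ((b j : EuclideanSpace ℂ (Fin n)) : Fin n → ℂ)
            ⬝ᵥ (A₁ *ᵥ ((b i : EuclideanSpace ℂ (Fin n)) : Fin n → ℂ))) = 0 from by
          rw [h0]; simp]
        simp [Prod.ext_iff]
    · rw [he1, he1, hA₁iso, hbo]
      simp [Prod.ext_iff]
  -- e spans
  have hVpLe : ∀ x : Vp, (x : EuclideanSpace ℂ (Fin n)) ∈ Submodule.span ℂ (Set.range e) := by
    intro x
    have hx : x ∈ (⊤ : Submodule ℂ Vp) := trivial
    rw [← b.toBasis.span_eq] at hx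
    have : (x : EuclideanSpace ℂ (Fin n)) ∈
        Submodule.map Vp.subtype (Submodule.span ℂ (Set.range b.toBasis)) :=
      ⟨x, hx, rfl⟩
    rw [Submodule.map_span] at this
    refine Submodule.span_mono ?_ this
    rintro y ⟨z, ⟨i, rfl⟩, rfl⟩
    exact ⟨(0, i), by rw [he0]; simp⟩
  have hVm : ∀ w : EuclideanSpace ℂ (Fin n), A₀ *ᵥ (w : Fin n → ℂ) = -w →
      w ∈ Submodule.span ℂ (Set.range e) := by
    intro w hw
    have hmem : WithLp.toLp 2 (A₁ *ᵥ (w : Fin n → ℂ)) ∈ Vp :=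
      (memVp _).mpr (hflip' _ hw)
    have hw2 : (w : Fin n → ℂ) = A₁ *ᵥ (A₁ *ᵥ (w : Fin n → ℂ)) := by
      rw [mulVec_mulVec, hA₁2, one_mulVec]
    have hx := hVpLe ⟨WithLp.toLp 2 (A₁ *ᵥ (w : Fin n → ℂ)), hmem⟩
    have himg : (Matrix.toEuclideanLin A₁) (WithLp.toLp 2 (A₁ *ᵥ (w : Fin n → ℂ))) ∈
        Submodule.map (Matrix.toEuclideanLin A₁) (Submodule.span ℂ (Set.range e)) :=
      ⟨_, hx, rfl⟩
    rw [Submodule.map_span] at himg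
    have hEq : (Matrix.toEuclideanLin A₁) (WithLp.toLp 2 (A₁ *ᵥ (w : Fin n → ℂ))) = w :=
      congrArg (WithLp.toLp 2) hw2.symm
    rw [hEq] at himg
    refine Submodule.span_mono ?_ himg
    rintro y ⟨z, ⟨r, rfl⟩, rfl⟩
    obtain ⟨p, i⟩ := r
    have hp2 : ∀ p : Fin 2, p = 0 ∨ p = 1 := by decide
    rcases hp2 p with rfl | rfl
    · exact ⟨(1, i), congrArg (WithLp.toLp 2) (h10 i).symm⟩
    · exact ⟨(0, i), congrArg (WithLp.toLp 2) (h11 i).symm⟩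
  have hspan : ⊤ ≤ Submodule.span ℂ (Set.range e) := by
    intro v _
    set g : Fin n → ℂ := (WithLp.equiv 2 (Fin n → ℂ)) v with hg
    have hfp : A₀ *ᵥ ((1/2 : ℂ) • (g + A₀ *ᵥ g)) = (1/2 : ℂ) • (g + A₀ *ᵥ g) := by
      rw [mulVec_smul, mulVec_add, mulVec_mulVec, hA₀2, one_mulVec]
      congr 1
      abel
    have hfm : A₀ *ᵥ ((1/2 : ℂ) • (g - A₀ *ᵥ g)) = -((1/2 : ℂ) • (g - A₀ *ᵥ g)) := by
      rw [mulVec_smul, mulVec_sub, mulVec_mulVec, hA₀2, one_mulVec, ← smul_neg]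
      congr 1
      abel
    have m1 : ((WithLp.equiv 2 (Fin n → ℂ)).symm ((1/2 : ℂ) • (g + A₀ *ᵥ g))) ∈
        Submodule.span ℂ (Set.range e) :=
      hVpLe ⟨(WithLp.equiv 2 (Fin n → ℂ)).symm ((1/2 : ℂ) • (g + A₀ *ᵥ g)), hfp⟩
    have m2 : ((WithLp.equiv 2 (Fin n → ℂ)).symm ((1/2 : ℂ) • (g - A₀ *ᵥ g))) ∈
        Submodule.span ℂ (Set.range e) :=
      hVm _ hfm
    have hsum := Submodule.add_mem _ m1 m2
    have hveq : v = (WithLp.equiv 2 (Fin n → ℂ)).symm ((1/2 : ℂ) • (g + A₀ *ᵥ g)) +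
        (WithLp.equiv 2 (Fin n → ℂ)).symm ((1/2 : ℂ) • (g - A₀ *ᵥ g)) := by
      apply (WithLp.equiv 2 (Fin n → ℂ)).injective
      funext x
      show g x = _
      show g x = (1/2 : ℂ) * (g x + (A₀ *ᵥ g) x) + (1/2 : ℂ) * (g x - (A₀ *ᵥ g) x)
      ring
    rw [hveq]
    exact hsum
  -- orthonormal as inner products
  have horthon : Orthonormal ℂ e := by
    rw [orthonormal_iff_ite]
    intro r s
    rw [EuclideanSpace.inner_eq_star_dotProduct, dotProduct_comm]
    exact hON r s
  -- dimension count
  have hdim : n = 2 * k := by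
    let B : Module.Basis (Fin 2 × Fin k) ℂ (EuclideanSpace ℂ (Fin n)) :=
      Module.Basis.mk horthon.linearIndependent hspan
    have h1 : Module.finrank ℂ (EuclideanSpace ℂ (Fin n)) = Fintype.card (Fin 2 × Fin k) :=
      Module.finrank_eq_card_basis B
    simp only [Fintype.card_prod, Fintype.card_fin, finrank_euclideanSpace_fin] at h1
    exact h1
  exact ⟨k, e, hdim, hON, h00, h01, h10, h11⟩

end Stmt7Aux

/-- a pair of anticommuting self-adjoint involutions on a finite-dimensional
Hilbert space forces the dimension to be even, and up to a unitary `U : H → ℂ² ⊗ K`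
the pair is `σ_Z ⊗ 1`, `σ_X ⊗ 1`. -/
theorem stmt7 {n : ℕ}
    (A₀ A₁ : Matrix (Fin n) (Fin n) ℂ)
    (hA₀h : A₀.IsHermitian) (hA₁h : A₁.IsHermitian)
    (hA₀2 : A₀ * A₀ = 1) (hA₁2 : A₁ * A₁ = 1)
    (hanti : A₀ * A₁ + A₁ * A₀ = 0) :
    Even n ∧
      ∃ (k : ℕ) (U : Matrix ((Fin 2) × (Fin k)) (Fin n) ℂ),
        U * Uᴴ = 1 ∧ Uᴴ * U = 1 ∧
        U * A₀ * Uᴴ = sigmaZ ⊗ₖ (1 : Matrix (Fin k) (Fin k) ℂ) ∧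
        U * A₁ * Uᴴ = sigmaX ⊗ₖ (1 : Matrix (Fin k) (Fin k) ℂ) := by
  classical
  obtain ⟨k, e, hdim, hON, h00, h01, h10, h11⟩ :=
    Stmt7Aux.key A₀ A₁ hA₀h hA₁h hA₀2 hA₁2 hanti
  refine ⟨⟨k, by omega⟩, k, ?_⟩
  let U : Matrix (Fin 2 × Fin k) (Fin n) ℂ :=
    Matrix.of fun r j => star ((e r : Fin n → ℂ) j)
  have hentry : ∀ (A : Matrix (Fin n) (Fin n) ℂ) r s,
      (U * A * Uᴴ) r s = star ((e r : Fin n → ℂ)) ⬝ᵥ (A *ᵥ (e s : Fin n → ℂ)) := by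
    intro A r s
    simp only [U, Matrix.mul_apply, Matrix.conjTranspose_apply, Matrix.of_apply,
      dotProduct, Matrix.mulVec, Pi.star_apply, star_star,
      Finset.sum_mul, Finset.mul_sum]
    rw [Finset.sum_comm]
    refine Finset.sum_congr rfl fun j _ => Finset.sum_congr rfl fun i _ => by ring
  have hUU : U * Uᴴ = 1 := by
    ext r s
    have : (U * Uᴴ) r s = star ((e r : Fin n → ℂ)) ⬝ᵥ (e s : Fin n → ℂ) := by
      simp only [U, Matrix.mul_apply, Matrix.conjTranspose_apply, Matrix.of_apply,
        dotProduct, Pi.star_apply, star_star]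
    rw [this, hON, Matrix.one_apply]
  have equivIdx : (Fin 2 × Fin k) ≃ Fin n :=
    finProdFinEquiv.trans (finCongr hdim.symm)
  have hUU2 : Uᴴ * U = 1 := (Matrix.mul_eq_one_comm_of_equiv equivIdx).mp hUU
  refine ⟨U, hUU, hUU2, ?_, ?_⟩
  · ext r s
    obtain ⟨p, i⟩ := r
    obtain ⟨q, j⟩ := s
    rw [hentry]
    rw [Matrix.kroneckerMap_apply]
    have hp2 : ∀ p : Fin 2, p = 0 ∨ p = 1 := by decide
    rcases hp2 q with rfl | rfl
    · rw [h00, hON]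
      rcases hp2 p with rfl | rfl <;>
        simp [sigmaZ, Matrix.one_apply, Prod.ext_iff]
    · rw [h01, dotProduct_neg, hON]
      rcases hp2 p with rfl | rfl <;>
        simp [sigmaZ, Matrix.one_apply, Prod.ext_iff] <;> split_ifs <;> simp
  · ext r s
    obtain ⟨p, i⟩ := r
    obtain ⟨q, j⟩ := s
    rw [hentry]
    rw [Matrix.kroneckerMap_apply]
    have hp2 : ∀ p : Fin 2, p = 0 ∨ p = 1 := by decide
    rcases hp2 q with rfl | rfl
    · rw [h10, hON]
      rcases hp2 p with rfl | rfl <;>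
        simp [sigmaX, Matrix.one_apply, Prod.ext_iff]
    · rw [h11, hON]
      rcases hp2 p with rfl | rfl <;>
        simp [sigmaX, Matrix.one_apply, Prod.ext_iff]
end
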